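/- Let A be a finite set and let n > |A|. Then the subgroup of Sym(A^n) generated by the 3-cycles (x·a·b·c·y x·b·c·a·y x·c·a·b·y) of words (a, b, c ∈ A not all equal, x, y words with |x|+|y| = n−3; the three words arise from one another by rotating three consecutive symbols) equals the set of conservative permutations of A^n whose restriction to each weight class of A^n is an even permutation of that weight class. -/

import Mathlib

/-- The weight of a word `x ∈ A^n`: the number of occurrences of each symbol. -/
def weight {A : Type*} [DecidableEq A] {n : ℕ} (x : Fin n → A) : A → ℕ :=
  fun a => (Finset.univ.filter fun i => x i = a).card

/-- A permutation of `A^n` is conservative if it preserves weights. -/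
def IsConservative {A : Type*} [DecidableEq A] {n : ℕ} (f : Equiv.Perm (Fin n → A)) : Prop :=
  ∀ x, weight (f x) = weight x

/-- A permutation of `A^n` is alternating conservative if it is conservative and its
restriction to each weight class is an even permutation of that class. -/
def AltConservative {A : Type*} [Fintype A] [DecidableEq A] {n : ℕ}
    (f : Equiv.Perm (Fin n → A)) : Prop :=
  ∃ hf : IsConservative f, ∀ w : A → ℕ,
    Equiv.Perm.sign (f.subtypePerm (p := fun x => weight x = w)
      (fun x => by simp only [hf x])) = 1

/-- The `3`-cycle of indices `i ↦ i+1 ↦ i+2 ↦ i` in `Fin n`. -/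
def rot3 {n : ℕ} (i : Fin n) (hi : (i : ℕ) + 2 < n) : Equiv.Perm (Fin n) :=
  Equiv.swap i ⟨(i : ℕ) + 1, by omega⟩ *
    Equiv.swap ⟨(i : ℕ) + 1, by omega⟩ ⟨(i : ℕ) + 2, hi⟩

namespace Stmt16Aux

open Equiv Equiv.Perm

variable {β : Type*} [DecidableEq β]

def cyc (x y z : β) : Equiv.Perm β := Equiv.swap x y * Equiv.swap y z

variable {x y z : β}

lemma cyc_fst (h1 : x ≠ y) (h3 : x ≠ z) : cyc x y z x = y := by
  rw [cyc, Equiv.Perm.mul_apply, swap_apply_of_ne_of_ne h1 h3, swap_apply_left]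

lemma cyc_snd (h2 : y ≠ z) (h3 : x ≠ z) : cyc x y z y = z := by
  rw [cyc, Equiv.Perm.mul_apply, swap_apply_left, swap_apply_of_ne_of_ne h3.symm h2.symm]

lemma cyc_thd : cyc x y z z = x := by
  rw [cyc, Equiv.Perm.mul_apply, swap_apply_right, swap_apply_right]

lemma cyc_other {t : β} (htx : t ≠ x) (hty : t ≠ y) (htz : t ≠ z) : cyc x y z t = t := by
  rw [cyc, Equiv.Perm.mul_apply, swap_apply_of_ne_of_ne hty htz,
    swap_apply_of_ne_of_ne htx hty]

lemma cyc_conj (σ : Equiv.Perm β) (x y z : β) :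
    σ * cyc x y z * σ⁻¹ = cyc (σ x) (σ y) (σ z) := by
  simp only [cyc, swap_apply_apply]
  group

lemma cyc_rot (h1 : x ≠ y) (h2 : y ≠ z) (h3 : x ≠ z) : cyc x y z = cyc y z x := by
  ext t
  rcases eq_or_ne t x with rfl | htx
  · rw [cyc_fst h1 h3, cyc_thd]
  rcases eq_or_ne t y with rfl | hty
  · rw [cyc_snd h2 h3, cyc_fst h2 h1.symm]
  rcases eq_or_ne t z with rfl | htz
  · rw [cyc_thd, cyc_snd h3.symm h1.symm]
  · rw [cyc_other htx hty htz, cyc_other hty htz htx]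

lemma cyc_inv : (cyc x y z)⁻¹ = cyc z y x := by
  rw [cyc, mul_inv_rev, swap_inv, swap_inv, cyc, swap_comm z y, swap_comm y x]

section Engine

variable (E : β → β → Prop) (G : Subgroup (Equiv.Perm β))

/-- connectivity via the symmetrization of `E`. -/
def Conn (a b : β) : Prop := Relation.ReflTransGen (fun u v => E u v ∨ E v u) a b

variable {E G}

lemma conn_symm {a b : β} (h : Conn E a b) : Conn E b a :=
  by haveI : Std.Symm (fun u v : β => E u v ∨ E v u) := ⟨fun _ _ h => Or.symm h⟩
     exact (Relation.ReflTransGen.stdSymm (r := fun u v => E u v ∨ E v u)).symm _ _ h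

lemma conn_trans {a b c : β} (h : Conn E a b) (h' : Conn E b c) : Conn E a c :=
  Relation.ReflTransGen.trans h h'

lemma conn_edge {a b : β} (h : E a b) : Conn E a b :=
  Relation.ReflTransGen.single (Or.inl h)

variable (E G) in
/-- The auxiliary predicate: `a ≠ b`, connected, and some 3-cycle through `a, b` lies in `G`. -/
def P (a b : β) : Prop :=
  a ≠ b ∧ Conn E a b ∧ ∃ c, c ≠ a ∧ c ≠ b ∧ Conn E a c ∧ cyc a b c ∈ G

/-- rotation of membership -/
lemma cyc_mem_rot (h1 : x ≠ y) (h2 : y ≠ z) (h3 : x ≠ z) (h : cyc x y z ∈ G) :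
    cyc y z x ∈ G := by rw [← cyc_rot h1 h2 h3]; exact h

lemma cyc_mem_inv (h : cyc x y z ∈ G) : cyc z y x ∈ G := by
  rw [← cyc_inv]; exact G.inv_mem h

/-- From `cyc x y t ∈ G` and `cyc x t z ∈ G` get `cyc x y z ∈ G`. -/
lemma cyc_mem_of_two {t : β} (hxy : x ≠ y) (hxt : x ≠ t) (hyt : y ≠ t)
    (hzx : z ≠ x) (hzy : z ≠ y) (hzt : z ≠ t)
    (h1 : cyc x y t ∈ G) (h2 : cyc x t z ∈ G) : cyc x y z ∈ G := by
  have hconj := cyc_conj (cyc x y t) x t z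
  rw [cyc_fst hxy hxt, cyc_thd, cyc_other hzx hzy hzt] at hconj
  have hmem : cyc y x z ∈ G := by
    rw [← hconj]; exact G.mul_mem (G.mul_mem h1 h2) (G.inv_mem h1)
  have : cyc z x y ∈ G := cyc_mem_inv hmem
  exact cyc_mem_rot hzx hxy (hzy) this

variable (E G) in
def HT : Prop := ∀ a b, E a b → ∃ c, a ≠ b ∧ b ≠ c ∧ a ≠ c ∧ E a c ∧ cyc a b c ∈ G

lemma P_of_edge (ht : HT E G) {a b : β} (h : E a b) : P E G a b := by
  obtain ⟨c, hab, hbc, hac, hEac, hmem⟩ := ht a b h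
  exact ⟨hab, conn_edge h, c, hac.symm, hbc.symm, conn_edge hEac, hmem⟩

lemma P_of_edge' (ht : HT E G) {a b : β} (h : E b a) : P E G a b := by
  obtain ⟨c, hba, hac, hbc, hEbc, hmem⟩ := ht b a h
  have h1 : cyc c a b ∈ G := cyc_mem_inv hmem
  have h2 : cyc a b c ∈ G :=
    cyc_mem_rot (x := c) (y := a) (z := b) hac.symm hba.symm hbc.symm h1
  have hconnab : Conn E a b := conn_symm (conn_edge h)
  refine ⟨hba.symm, hconnab, c, hac.symm, hbc.symm, ?_, h2⟩
  exact conn_trans hconnab (conn_edge hEbc)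

lemma P_symm {a b : β} (h : P E G a b) : P E G b a := by
  obtain ⟨hab, hconn, c, hca, hcb, hconnac, hmem⟩ := h
  have h1 : cyc c b a ∈ G := cyc_mem_inv hmem
  have h2 : cyc b a c ∈ G :=
    cyc_mem_rot (x := c) (y := b) (z := a) hcb hab.symm hca h1
  exact ⟨hab.symm, conn_symm hconn, c, hcb, hca,
    conn_trans (conn_symm hconn) hconnac, h2⟩

end Engine

section Engine2
variable {E : β → β → Prop} {G : Subgroup (Equiv.Perm β)}

lemma Pxw_of_xyw {x y w : β} (hxy : x ≠ y) (hyw : y ≠ w) (hxw : x ≠ w)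
    (cxy : Conn E x y) (cxw : Conn E x w) (m : cyc x y w ∈ G) : P E G x w := by
  have a1 : cyc w y x ∈ G := cyc_mem_inv m
  have a2 : cyc y x w ∈ G := cyc_mem_rot hyw.symm hxy.symm hxw.symm a1
  have a3 : cyc x w y ∈ G := cyc_mem_rot hxy.symm hxw hyw a2
  exact ⟨hxw, cxw, y, hxy.symm, hyw, cxy, a3⟩

lemma P_trans {x y w : β} (hxw : x ≠ w) (h1 : P E G x y) (h2 : P E G y w) : P E G x w := by
  obtain ⟨hxy, cxy, z, hzx, hzy, cxz, m1⟩ := h1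
  obtain ⟨hyw, cyw, t, hty, htw, cyt, m2⟩ := h2
  have cxw : Conn E x w := conn_trans cxy cyw
  rcases eq_or_ne z w with rfl | hzw
  · exact Pxw_of_xyw hxy hyw hxw cxy cxw m1
  by_cases htx : t = x
  · rw [htx] at m2 hty htw
    -- m2 : cyc y w x ∈ G
    have b1 : cyc w x y ∈ G := cyc_mem_rot hyw hxw.symm hxy.symm m2
    have b2 : cyc x y w ∈ G := cyc_mem_rot hxw.symm hxy hyw.symm b1
    exact Pxw_of_xyw hxy hyw hxw cxy cxw b2
  by_cases htz : t = z
  · rw [htz] at m2 hty htw cyt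
    -- m2 : cyc y w z ∈ G ; σ := cyc y w z
    have hconj := cyc_conj (cyc y w z) x y z
    rw [cyc_other hxy hxw hzx.symm, cyc_fst hyw hzy.symm, cyc_thd] at hconj
    have m3 : cyc x w y ∈ G := by
      rw [← hconj]; exact G.mul_mem (G.mul_mem m2 m1) (G.inv_mem m2)
    exact ⟨hxw, cxw, y, hxy.symm, hyw, cxy, m3⟩
  · -- generic: σ := cyc y w t
    replace htx : t ≠ x := htx
    replace htz : t ≠ z := htz
    have hconj := cyc_conj (cyc y w t) x y z
    rw [cyc_other hxy hxw htx.symm, cyc_fst hyw hty.symm, cyc_other hzy hzw htz.symm]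
      at hconj
    have m3 : cyc x w z ∈ G := by
      rw [← hconj]; exact G.mul_mem (G.mul_mem m2 m1) (G.inv_mem m2)
    exact ⟨hxw, cxw, z, hzx, hzw, cxz, m3⟩

lemma conn_P (ht : HT E G) {a b : β} (h : Conn E a b) : a = b ∨ P E G a b := by
  induction h with
  | refl => exact Or.inl rfl
  | @tail b c hab hbc ih =>
    have pbc : P E G b c := hbc.elim (P_of_edge ht) (P_of_edge' ht)
    rcases eq_or_ne a c with rfl | hac
    · exact Or.inl rfl
    rcases ih with rfl | pab
    · exact Or.inr pbc
    · exact Or.inr (P_trans hac pab pbc)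

theorem cyc_mem_of_conn (ht : HT E G) {a b c : β} (hab : a ≠ b) (hac : a ≠ c) (hbc : b ≠ c)
    (h1 : Conn E a b) (h2 : Conn E a c) : cyc a b c ∈ G := by
  rcases conn_P ht h1 with rfl | pab
  · exact absurd rfl hab
  obtain ⟨_, _, t, hta, htb, hat, m1⟩ := pab
  rcases eq_or_ne t c with rfl | htc
  · exact m1
  have ptc : P E G t c := by
    rcases conn_P ht (conn_trans (conn_symm hat) h2) with rfl | p
    · exact absurd rfl htc
    · exact p
  obtain ⟨_, _, s, hst, hsc, _, m2⟩ := ptc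
  by_cases hsa : s = a
  · rw [hsa] at m2 hst hsc
    -- m2 : cyc t c a ∈ G
    have b1 : cyc c a t ∈ G := cyc_mem_rot htc hac.symm hta m2
    have m3 : cyc a t c ∈ G := cyc_mem_rot hac.symm hta.symm htc.symm b1
    exact cyc_mem_of_two hab hta.symm htb.symm hac.symm hbc.symm htc.symm m1 m3
  by_cases hsb : s = b
  · rw [hsb] at m2 hst hsc
    -- m2 : cyc t c b ∈ G ; σ := cyc t c b
    have hconj := cyc_conj (cyc t c b) a b t
    rw [cyc_other hta.symm hac hab, cyc_thd, cyc_fst htc htb] at hconj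
    have m3 : cyc a t c ∈ G := by
      rw [← hconj]; exact G.mul_mem (G.mul_mem m2 m1) (G.inv_mem m2)
    exact cyc_mem_of_two hab hta.symm htb.symm hac.symm hbc.symm htc.symm m1 m3
  · -- σ := cyc t c s
    replace hsa : s ≠ a := hsa
    replace hsb : s ≠ b := hsb
    have hconj := cyc_conj (cyc t c s) a b t
    rw [cyc_other hta.symm hac hsa.symm, cyc_other htb.symm hbc hsb.symm,
      cyc_fst htc hst.symm] at hconj
    rw [← hconj]; exact G.mul_mem (G.mul_mem m2 m1) (G.inv_mem m2)

end Engine2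

section Triple
variable {G : Subgroup (Equiv.Perm β)}

lemma cyc_mem_triple {p q r : β} (hpq : p ≠ q) (hqr : q ≠ r) (hpr : p ≠ r)
    (h : cyc p q r ∈ G) {a b c : β}
    (ha : a = p ∨ a = q ∨ a = r) (hb : b = p ∨ b = q ∨ b = r) (hc : c = p ∨ c = q ∨ c = r)
    (hab : a ≠ b) (hbc : b ≠ c) (hac : a ≠ c) : cyc a b c ∈ G := by
  have h1 : cyc q r p ∈ G := cyc_mem_rot hpq hqr hpr h
  have h2 : cyc r p q ∈ G := cyc_mem_rot hqr hpr.symm hpq.symm h1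
  have h3 : cyc r q p ∈ G := cyc_mem_inv h
  have h4 : cyc q p r ∈ G := cyc_mem_rot hqr.symm hpq.symm hpr.symm h3
  have h5 : cyc p r q ∈ G := cyc_mem_rot hpq.symm hpr hqr h4
  rcases ha with rfl | rfl | rfl <;> rcases hb with rfl | rfl | rfl <;>
    rcases hc with rfl | rfl | rfl <;>
    first
      | exact absurd rfl hab
      | exact absurd rfl hbc
      | exact absurd rfl hac
      | exact h
      | exact h1
      | exact h2
      | exact h3
      | exact h4
      | exact h5

lemma triple_third {p q r a b : β} (hpq : p ≠ q) (hqr : q ≠ r) (hpr : p ≠ r)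
    (ha : a = p ∨ a = q ∨ a = r) (hb : b = p ∨ b = q ∨ b = r) (hab : a ≠ b) :
    ∃ c, (c = p ∨ c = q ∨ c = r) ∧ a ≠ c ∧ b ≠ c := by
  rcases ha with rfl | rfl | rfl
  · rcases hb with rfl | rfl | rfl
    · exact absurd rfl hab
    · exact ⟨r, .inr (.inr rfl), hpr, hqr⟩
    · exact ⟨q, .inr (.inl rfl), hpq, hqr.symm⟩
  · rcases hb with rfl | rfl | rfl
    · exact ⟨r, .inr (.inr rfl), hqr, hpr⟩
    · exact absurd rfl hab
    · exact ⟨p, .inl rfl, hpq.symm, hpr.symm⟩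
  · rcases hb with rfl | rfl | rfl
    · exact ⟨q, .inr (.inl rfl), hqr.symm, hpq⟩
    · exact ⟨p, .inl rfl, hpr.symm, hpq.symm⟩
    · exact absurd rfl hab

end Triple

section Positions
variable {n : ℕ}

def Gpos (n : ℕ) : Subgroup (Equiv.Perm (Fin n)) :=
  Subgroup.closure {σ : Equiv.Perm (Fin n) | ∃ (i : Fin n) (hi : (i : ℕ) + 2 < n), σ = rot3 i hi}

def Epos (n : ℕ) : Fin n → Fin n → Prop := fun a b =>
  a ≠ b ∧ ∃ (i : Fin n) (hi : (i : ℕ) + 2 < n),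
    (a = i ∨ a = ⟨(i : ℕ) + 1, by omega⟩ ∨ a = ⟨(i : ℕ) + 2, hi⟩) ∧
    (b = i ∨ b = ⟨(i : ℕ) + 1, by omega⟩ ∨ b = ⟨(i : ℕ) + 2, hi⟩)

lemma rot3_eq_cyc (i : Fin n) (hi : (i : ℕ) + 2 < n) :
    rot3 i hi = cyc i ⟨(i : ℕ) + 1, by omega⟩ ⟨(i : ℕ) + 2, hi⟩ := rfl

lemma htpos : HT (Epos n) (Gpos n) := by
  rintro a b ⟨hab, i, hi, ha, hb⟩
  have hpq : (i : Fin n) ≠ ⟨(i : ℕ) + 1, by omega⟩ := by simp only [Ne, Fin.ext_iff]; omega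
  have hqr : (⟨(i : ℕ) + 1, by omega⟩ : Fin n) ≠ ⟨(i : ℕ) + 2, hi⟩ := by
    simp only [Ne, Fin.ext_iff]; omega
  have hpr : (i : Fin n) ≠ ⟨(i : ℕ) + 2, hi⟩ := by simp only [Ne, Fin.ext_iff]; omega
  have hmem : cyc (i : Fin n) ⟨(i : ℕ) + 1, by omega⟩ ⟨(i : ℕ) + 2, hi⟩ ∈ Gpos n :=
    Subgroup.subset_closure ⟨i, hi, (rot3_eq_cyc i hi).symm⟩
  obtain ⟨c, hc, hac, hbc⟩ := triple_third hpq hqr hpr ha hb hab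
  exact ⟨c, hab, hbc, hac, ⟨hac, i, hi, ha, hc⟩,
    cyc_mem_triple hpq hqr hpr hmem ha hb hc hab hbc hac⟩

lemma epos_step (hn3 : 3 ≤ n) (k : ℕ) (h : k + 1 < n) :
    Epos n ⟨k, by omega⟩ ⟨k + 1, h⟩ := by
  refine ⟨by simp only [Ne, Fin.ext_iff]; omega, ?_⟩
  by_cases h2 : k + 2 < n
  · exact ⟨⟨k, by omega⟩, h2, Or.inl rfl, Or.inr (Or.inl (by simp only [Fin.ext_iff]))⟩
  · refine ⟨⟨k - 1, by omega⟩, by show k - 1 + 2 < n; omega,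
      Or.inr (Or.inl ?_), Or.inr (Or.inr ?_)⟩ <;> simp only [Fin.ext_iff] <;> omega

lemma conn_pos (hn3 : 3 ≤ n) (a b : Fin n) : Conn (Epos n) a b := by
  suffices H : ∀ (k : ℕ) (h : k < n), Conn (Epos n) ⟨k, h⟩ ⟨0, by omega⟩ by
    have ha := H a.1 a.2
    have hb := H b.1 b.2
    simp only [Fin.eta] at ha hb
    exact conn_trans ha (conn_symm hb)
  intro k
  induction k with
  | zero => intro h; exact Relation.ReflTransGen.refl
  | succ k ih =>
    intro h
    have h1 : Conn (Epos n) (⟨k + 1, h⟩ : Fin n) ⟨k, by omega⟩ :=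
      conn_symm (conn_edge (epos_step hn3 k h))
    exact conn_trans h1 (ih (by omega))

lemma pos3 (hn3 : 3 ≤ n) {a b c : Fin n} (hab : a ≠ b) (hac : a ≠ c) (hbc : b ≠ c) :
    cyc a b c ∈ Gpos n :=
  cyc_mem_of_conn htpos hab hac hbc (conn_pos hn3 a b) (conn_pos hn3 a c)

lemma dswap (hn3 : 3 ≤ n) {a b c d : Fin n} (hab : a ≠ b) (hcd : c ≠ d) :
    Equiv.swap a b * Equiv.swap c d ∈ Gpos n := by
  by_cases hac : a = c
  · subst hac
    by_cases hbd : b = d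
    · subst hbd; rw [Equiv.swap_mul_self]; exact one_mem _
    · have he : Equiv.swap a b * Equiv.swap a d = cyc b a d := by
        rw [cyc, Equiv.swap_comm b a]
      rw [he]; exact pos3 hn3 hab.symm hbd hcd
  by_cases had : a = d
  · subst had
    by_cases hbc : b = c
    · subst hbc; rw [Equiv.swap_comm b a, Equiv.swap_mul_self]; exact one_mem _
    · have he : Equiv.swap a b * Equiv.swap c a = cyc b a c := by
        rw [cyc, Equiv.swap_comm b a, Equiv.swap_comm a c]
      rw [he]; exact pos3 hn3 hab.symm hbc (fun h => hcd (h.symm ▸ rfl))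
  by_cases hbc : b = c
  · subst hbc
    show cyc a b d ∈ Gpos n
    exact pos3 hn3 hab had hcd
  by_cases hbd : b = d
  · subst hbd
    have he : Equiv.swap a b * Equiv.swap c b = cyc a b c := by
      rw [cyc, Equiv.swap_comm c b]
    rw [he]; exact pos3 hn3 hab hac hbc
  · have he : Equiv.swap a b * Equiv.swap c d = cyc a b c * cyc b c d := by
      rw [cyc, cyc, mul_assoc, ← mul_assoc (Equiv.swap b c), Equiv.swap_mul_self, one_mul]
    rw [he]; exact mul_mem (pos3 hn3 hab hac hbc) (pos3 hn3 hbc hbd hcd)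

end Positions

section Words
variable {A : Type*} [Fintype A] [DecidableEq A] {n : ℕ}

/-- the generating set of the theorem -/
def genSet (A : Type*) [DecidableEq A] (n : ℕ) : Set (Equiv.Perm (Fin n → A)) :=
  {s : Equiv.Perm (Fin n → A) |
    ∃ (i : Fin n) (hi : (i : ℕ) + 2 < n) (w : Fin n → A),
      ¬ (w i = w ⟨(i : ℕ) + 1, by omega⟩ ∧
         w ⟨(i : ℕ) + 1, by omega⟩ = w ⟨(i : ℕ) + 2, hi⟩) ∧
      s = Equiv.swap w (fun j => w (rot3 i hi j)) *
          Equiv.swap (fun j => w (rot3 i hi j)) (fun j => w (rot3 i hi (rot3 i hi j)))}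

def GW (A : Type*) [DecidableEq A] (n : ℕ) : Subgroup (Equiv.Perm (Fin n → A)) :=
  Subgroup.closure (genSet A n)

lemma weight_comp (u : Fin n → A) (σ : Equiv.Perm (Fin n)) :
    weight (fun j => u (σ j)) = weight u := by
  funext a
  unfold weight
  exact Finset.card_equiv σ (by simp)

lemma rot3_fst (i : Fin n) (hi : (i : ℕ) + 2 < n) : rot3 i hi i = ⟨(i : ℕ) + 1, by omega⟩ :=
  cyc_fst (by simp only [Ne, Fin.ext_iff]; omega) (by simp only [Ne, Fin.ext_iff]; omega)

lemma rot3_snd (i : Fin n) (hi : (i : ℕ) + 2 < n) :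
    rot3 i hi ⟨(i : ℕ) + 1, by omega⟩ = ⟨(i : ℕ) + 2, hi⟩ :=
  cyc_snd (by simp only [Ne, Fin.ext_iff]; omega) (by simp only [Ne, Fin.ext_iff]; omega)

lemma rot3_thd (i : Fin n) (hi : (i : ℕ) + 2 < n) : rot3 i hi ⟨(i : ℕ) + 2, hi⟩ = i :=
  cyc_thd

lemma rot3_other (i : Fin n) (hi : (i : ℕ) + 2 < n) {j : Fin n} (h1 : j ≠ i)
    (h2 : j ≠ ⟨(i : ℕ) + 1, by omega⟩) (h3 : j ≠ ⟨(i : ℕ) + 2, hi⟩) : rot3 i hi j = j :=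
  cyc_other h1 h2 h3

/-- distinctness of a generator triple -/
lemma word_triple_ne {w : Fin n → A} {i : Fin n} {hi : (i : ℕ) + 2 < n}
    (hne : ¬ (w i = w ⟨(i : ℕ) + 1, by omega⟩ ∧
        w ⟨(i : ℕ) + 1, by omega⟩ = w ⟨(i : ℕ) + 2, hi⟩)) :
    w ≠ (fun j => w (rot3 i hi j)) ∧
    (fun j => w (rot3 i hi j)) ≠ (fun j => w (rot3 i hi (rot3 i hi j))) ∧
    w ≠ (fun j => w (rot3 i hi (rot3 i hi j))) := by
  set i1 : Fin n := ⟨(i : ℕ) + 1, by omega⟩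
  set i2 : Fin n := ⟨(i : ℕ) + 2, hi⟩
  refine ⟨fun h => ?_, fun h => ?_, fun h => ?_⟩
  · have e1 := congrFun h i
    have e2 := congrFun h i1
    rw [rot3_fst] at e1
    rw [rot3_snd] at e2
    exact hne ⟨e1, e2⟩
  · have e1 := congrFun h i
    have e2 := congrFun h i2
    rw [rot3_fst, rot3_snd] at e1
    rw [rot3_thd, rot3_fst] at e2
    exact hne ⟨e2, e1⟩
  · have e1 := congrFun h i
    have e2 := congrFun h i1
    rw [rot3_fst, rot3_snd] at e1
    rw [rot3_snd, rot3_thd] at e2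
    exact hne ⟨e2.symm, e2.trans e1⟩

def Eword (A : Type*) [DecidableEq A] (n : ℕ) : (Fin n → A) → (Fin n → A) → Prop := fun u v =>
  u ≠ v ∧ ∃ (i : Fin n) (hi : (i : ℕ) + 2 < n) (w : Fin n → A),
    (¬ (w i = w ⟨(i : ℕ) + 1, by omega⟩ ∧
        w ⟨(i : ℕ) + 1, by omega⟩ = w ⟨(i : ℕ) + 2, hi⟩)) ∧
    (u = w ∨ u = (fun j => w (rot3 i hi j)) ∨ u = (fun j => w (rot3 i hi (rot3 i hi j)))) ∧
    (v = w ∨ v = (fun j => w (rot3 i hi j)) ∨ v = (fun j => w (rot3 i hi (rot3 i hi j))))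

lemma htword : HT (Eword A n) (GW A n) := by
  rintro a b ⟨hab, i, hi, w, hne, ha, hb⟩
  obtain ⟨h1, h2, h3⟩ := word_triple_ne hne
  have hmem : cyc w (fun j => w (rot3 i hi j)) (fun j => w (rot3 i hi (rot3 i hi j))) ∈ GW A n :=
    Subgroup.subset_closure ⟨i, hi, w, hne, rfl⟩
  obtain ⟨c, hc, hac, hbc⟩ := triple_third h1 h2 h3 ha hb hab
  exact ⟨c, hab, hbc, hac, ⟨hac, i, hi, w, hne, ha, hc⟩,
    cyc_mem_triple h1 h2 h3 hmem ha hb hc hab hbc hac⟩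

lemma conn_rot_step (u : Fin n → A) (i : Fin n) (hi : (i : ℕ) + 2 < n) :
    Conn (Eword A n) u (fun j => u (rot3 i hi j)) := by
  by_cases hne : ¬ (u i = u ⟨(i : ℕ) + 1, by omega⟩ ∧
      u ⟨(i : ℕ) + 1, by omega⟩ = u ⟨(i : ℕ) + 2, hi⟩)
  · exact conn_edge ⟨(word_triple_ne hne).1, i, hi, u, hne, Or.inl rfl, Or.inr (Or.inl rfl)⟩
  · push_neg at hne
    have heq : (fun j => u (rot3 i hi j)) = u := by
      funext j
      rcases eq_or_ne j i with rfl | hj1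
      · rw [rot3_fst]; exact hne.1.symm
      rcases eq_or_ne j (⟨(i : ℕ) + 1, by omega⟩ : Fin n) with rfl | hj2
      · rw [rot3_snd]; exact hne.2.symm
      rcases eq_or_ne j (⟨(i : ℕ) + 2, hi⟩ : Fin n) with rfl | hj3
      · rw [rot3_thd]; exact hne.1.trans hne.2
      · rw [rot3_other i hi hj1 hj2 hj3]
    rw [heq]
    exact Relation.ReflTransGen.refl

lemma conn_comp (u : Fin n → A) {σ : Equiv.Perm (Fin n)} (hσ : σ ∈ Gpos n) :
    Conn (Eword A n) u (fun j => u (σ j)) := by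
  induction hσ using Subgroup.closure_induction generalizing u with
  | mem τ hτ =>
    obtain ⟨i, hi, rfl⟩ := hτ
    exact conn_rot_step u i hi
  | one => exact Relation.ReflTransGen.refl
  | mul σ τ hσ hτ ihσ ihτ =>
    have h1 := ihσ u
    have h2 := ihτ (fun j => u (σ j))
    exact conn_trans h1 h2
  | inv σ hσ ihσ =>
    have h1 := ihσ (fun j => u (σ⁻¹ j))
    have heq : (fun j => u (σ⁻¹ (σ j))) = u := by
      funext j; rw [← Equiv.Perm.mul_apply, inv_mul_cancel, Equiv.Perm.one_apply]
    rw [heq] at h1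
    exact conn_symm h1

lemma conn_swap (hn : Fintype.card A < n) (u : Fin n → A) (p q : Fin n) :
    Conn (Eword A n) u (fun j => u (Equiv.swap p q j)) := by
  by_cases heq : (fun j => u (Equiv.swap p q j)) = u
  · rw [heq]; exact Relation.ReflTransGen.refl
  · have hex : ∃ j, u (Equiv.swap p q j) ≠ u j := by
      by_contra h
      push_neg at h
      exact heq (funext h)
    obtain ⟨j0, hj0⟩ := hex
    have hcard : 1 < Fintype.card A := Fintype.one_lt_card_iff.mpr ⟨_, _, hj0⟩
    have hn3 : 3 ≤ n := by omega
    have hpq : p ≠ q := by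
      rintro rfl
      apply heq
      funext j
      rw [Equiv.swap_self]
      rfl
    obtain ⟨p', q', hpq', hupq⟩ :=
      Fintype.exists_ne_map_eq_of_card_lt u (by simpa using hn)
    have hσ : Equiv.swap p' q' * Equiv.swap p q ∈ Gpos n := dswap hn3 hpq' hpq
    have h1 := conn_comp (A := A) u hσ
    have heq2 : (fun j => u ((Equiv.swap p' q' * Equiv.swap p q) j)) =
        (fun j => u (Equiv.swap p q j)) := by
      funext j
      rw [Equiv.Perm.mul_apply]
      rcases eq_or_ne (Equiv.swap p q j) p' with he | h1'
      · rw [he, Equiv.swap_apply_left, ← hupq, ← he]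
      rcases eq_or_ne (Equiv.swap p q j) q' with he | h2'
      · rw [he, Equiv.swap_apply_right, hupq, ← he]
      · rw [Equiv.swap_apply_of_ne_of_ne h1' h2']
    rw [heq2] at h1
    exact h1

lemma conn_of_weight (hn : Fintype.card A < n) (u v : Fin n → A) (hw : weight u = weight v) :
    Conn (Eword A n) u v := by
  suffices H : ∀ (k : ℕ) (u v : Fin n → A),
      (Finset.univ.filter fun i => u i ≠ v i).card ≤ k → weight u = weight v →
      Conn (Eword A n) u v from H _ u v le_rfl hw
  intro k
  induction k with
  | zero =>
    intro u v hc _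
    have : u = v := by
      funext i
      by_contra hne
      have : i ∈ Finset.univ.filter fun i => u i ≠ v i := by simp [hne]
      rw [Finset.card_eq_zero.mp (Nat.le_zero.mp hc)] at this
      exact absurd this (Finset.notMem_empty i)
    rw [this]
    exact Relation.ReflTransGen.refl
  | succ k ih =>
    intro u v hc hw
    by_cases huv : u = v
    · rw [huv]; exact Relation.ReflTransGen.refl
    have hex : ∃ i, u i ≠ v i := by
      by_contra h
      push_neg at h
      exact huv (funext h)
    obtain ⟨i, hi⟩ := hex
    -- find j with u j = v i and v j ≠ v i
    have hcount : (Finset.univ.filter fun t => u t = v i).card =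
        (Finset.univ.filter fun t => v t = v i).card := congrFun hw (v i)
    have hexj : ∃ j, u j = v i ∧ v j ≠ v i := by
      by_contra h
      push_neg at h
      have hsub : (Finset.univ.filter fun t => u t = v i) ⊆
          (Finset.univ.filter fun t => v t = v i).erase i := by
        intro t ht
        simp only [Finset.mem_filter, Finset.mem_univ, true_and] at ht
        refine Finset.mem_erase.mpr ⟨?_, by simp [h t ht]⟩
        rintro rfl
        exact hi ht
      have hlt : ((Finset.univ.filter fun t => v t = v i).erase i).card <
          (Finset.univ.filter fun t => v t = v i).card :=
        Finset.card_erase_lt_of_mem (by simp)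
      have := Finset.card_le_card hsub
      omega
    obtain ⟨j, hj1, hj2⟩ := hexj
    have hij : i ≠ j := by
      rintro rfl
      exact hi hj1
    set u' : Fin n → A := fun t => u (Equiv.swap i j t) with hu'
    have hconn1 : Conn (Eword A n) u u' := conn_swap hn u i j
    have hwu' : weight u' = weight u := weight_comp u (Equiv.swap i j)
    have hsub : (Finset.univ.filter fun t => u' t ≠ v t) ⊆
        (Finset.univ.filter fun t => u t ≠ v t).erase i := by
      intro t ht
      simp only [Finset.mem_filter, Finset.mem_univ, true_and, hu'] at ht
      rcases eq_or_ne t i with rfl | hti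
      · rw [Equiv.swap_apply_left] at ht
        exact absurd hj1 ht
      rcases eq_or_ne t j with rfl | htj
      · rw [Equiv.swap_apply_right] at ht
        refine Finset.mem_erase.mpr ⟨hti, ?_⟩
        simp only [Finset.mem_filter, Finset.mem_univ, true_and]
        exact fun hh => hj2 (hh.symm.trans hj1)
      · rw [Equiv.swap_apply_of_ne_of_ne hti htj] at ht
        exact Finset.mem_erase.mpr ⟨hti, by simp [ht]⟩
    have hmem : i ∈ (Finset.univ.filter fun t => u t ≠ v t) := by simp [hi]
    have hcard' : (Finset.univ.filter fun t => u' t ≠ v t).card ≤ k := by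
      have h1 := Finset.card_le_card hsub
      have h2 := Finset.card_erase_lt_of_mem hmem
      omega
    exact conn_trans hconn1 (ih u' v hcard' (hwu'.trans hw))

lemma word3 (hn : Fintype.card A < n) {x y z : Fin n → A} (hxy : x ≠ y) (hxz : x ≠ z)
    (hyz : y ≠ z) (hwy : weight x = weight y) (hwz : weight x = weight z) :
    cyc x y z ∈ GW A n :=
  cyc_mem_of_conn htword hxy hxz hyz (conn_of_weight hn x y hwy) (conn_of_weight hn x z hwz)

end Words

section AltSide
variable {A : Type*} [Fintype A] [DecidableEq A] {n : ℕ}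

lemma cons_inv {g : Equiv.Perm (Fin n → A)} (hg : IsConservative g) : IsConservative g⁻¹ :=
  fun x => by rw [← hg (g⁻¹ x), ← Equiv.Perm.mul_apply, mul_inv_cancel, Equiv.Perm.one_apply]

lemma sign_cyc {γ : Type*} [DecidableEq γ] [Fintype γ] {x y z : γ}
    (hxy : x ≠ y) (hyz : y ≠ z) : Equiv.Perm.sign (cyc x y z) = 1 := by
  rw [cyc, map_mul, Equiv.Perm.sign_swap hxy, Equiv.Perm.sign_swap hyz]
  decide

lemma subtypePerm_cyc {x y z : β} {p : β → Prop}
    (hxy : x ≠ y) (hyz : y ≠ z) (hxz : x ≠ z)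
    (hx : p x) (hy : p y) (hz : p z) (h : ∀ t, p (cyc x y z t) ↔ p t) :
    (cyc x y z).subtypePerm h = cyc (⟨x, hx⟩ : {t // p t}) ⟨y, hy⟩ ⟨z, hz⟩ := by
  have hxy' : (⟨x, hx⟩ : {t // p t}) ≠ ⟨y, hy⟩ := fun hh => hxy (congrArg Subtype.val hh)
  have hyz' : (⟨y, hy⟩ : {t // p t}) ≠ ⟨z, hz⟩ := fun hh => hyz (congrArg Subtype.val hh)
  have hxz' : (⟨x, hx⟩ : {t // p t}) ≠ ⟨z, hz⟩ := fun hh => hxz (congrArg Subtype.val hh)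
  apply Equiv.ext
  rintro ⟨t, ht⟩
  apply Subtype.ext
  simp only [Equiv.Perm.subtypePerm_apply]
  rcases eq_or_ne t x with rfl | htx
  · rw [show (⟨t, ht⟩ : {t // p t}) = ⟨t, hx⟩ from rfl, cyc_fst hxy' hxz']
    exact cyc_fst hxy hxz
  rcases eq_or_ne t y with rfl | hty
  · rw [show (⟨t, ht⟩ : {t // p t}) = ⟨t, hy⟩ from rfl, cyc_snd hyz' hxz']
    exact cyc_snd hyz hxz
  rcases eq_or_ne t z with rfl | htz
  · rw [show (⟨t, ht⟩ : {t // p t}) = ⟨t, hz⟩ from rfl,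
      cyc_thd (x := (⟨x, hx⟩ : {t // p t})) (y := ⟨y, hy⟩) (z := ⟨t, hz⟩)]
    exact cyc_thd
  · have h1 : (⟨t, ht⟩ : {t // p t}) ≠ ⟨x, hx⟩ := fun hh => htx (congrArg Subtype.val hh)
    have h2 : (⟨t, ht⟩ : {t // p t}) ≠ ⟨y, hy⟩ := fun hh => hty (congrArg Subtype.val hh)
    have h3 : (⟨t, ht⟩ : {t // p t}) ≠ ⟨z, hz⟩ := fun hh => htz (congrArg Subtype.val hh)
    rw [cyc_other h1 h2 h3]
    exact cyc_other htx hty htz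

/-- the subgroup of alternating conservative permutations -/
def altCons (A : Type*) [Fintype A] [DecidableEq A] (n : ℕ) :
    Subgroup (Equiv.Perm (Fin n → A)) where
  carrier := {g | AltConservative g}
  one_mem' := by
    refine ⟨fun x => rfl, fun w => ?_⟩
    have h1 : (1 : Equiv.Perm (Fin n → A)).subtypePerm
        (p := fun x => weight x = w) (fun x => Iff.rfl) = 1 :=
      Equiv.ext fun x => Subtype.ext rfl
    rw [h1, map_one]
  mul_mem' := by
    rintro a b ⟨ca, sa⟩ ⟨cb, sb⟩
    refine ⟨fun x => (ca (b x)).trans (cb x), fun w => ?_⟩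
    have h1 : (a * b).subtypePerm (p := fun x => weight x = w)
        (fun x => by simp only [Equiv.Perm.mul_apply, ca (b x), cb x]) =
        a.subtypePerm (fun x => by simp only [ca x]) *
          b.subtypePerm (fun x => by simp only [cb x]) :=
      Equiv.ext fun x => Subtype.ext rfl
    rw [h1, map_mul, sa, sb, mul_one]
  inv_mem' := by
    rintro a ⟨ca, sa⟩
    refine ⟨cons_inv ca, fun w => ?_⟩
    have h1 : (a⁻¹).subtypePerm (p := fun x => weight x = w)
        (fun x => by simp only [cons_inv ca x]) =
        (a.subtypePerm (fun x => by simp only [ca x]))⁻¹ :=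
      Equiv.ext fun x => Subtype.ext rfl
    rw [h1, map_inv, sa, inv_one]

lemma gen_altCons {s : Equiv.Perm (Fin n → A)} (hs : s ∈ genSet A n) : AltConservative s := by
  obtain ⟨i, hi, w, hne, rfl⟩ := hs
  obtain ⟨h1, h2, h3⟩ := word_triple_ne hne
  set w1 : Fin n → A := fun j => w (rot3 i hi j) with hw1def
  set w2 : Fin n → A := fun j => w (rot3 i hi (rot3 i hi j)) with hw2def
  have hww1 : weight w1 = weight w := weight_comp w (rot3 i hi)
  have hww2 : weight w2 = weight w :=
    (weight_comp w1 (rot3 i hi)).trans hww1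
  show AltConservative (cyc w w1 w2)
  have hcons : IsConservative (cyc w w1 w2) := by
    intro x
    rcases eq_or_ne x w with rfl | hxw
    · rw [cyc_fst h1 h3]; exact hww1
    rcases eq_or_ne x w1 with rfl | hxw1
    · rw [cyc_snd h2 h3]; exact hww2.trans hww1.symm
    rcases eq_or_ne x w2 with rfl | hxw2
    · rw [cyc_thd]; exact hww2.symm
    · rw [cyc_other hxw hxw1 hxw2]
  refine ⟨hcons, fun w0 => ?_⟩
  by_cases h0 : weight w = w0
  · have e1 : (cyc w w1 w2).subtypePerm (p := fun x => weight x = w0)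
        (fun x => by simp only [hcons x]) =
        cyc (⟨w, h0⟩ : {t // weight t = w0}) ⟨w1, hww1.trans h0⟩ ⟨w2, hww2.trans h0⟩ :=
      subtypePerm_cyc h1 h2 h3 h0 (hww1.trans h0) (hww2.trans h0) _
    rw [e1]
    exact sign_cyc (fun hh => h1 (congrArg Subtype.val hh))
      (fun hh => h2 (congrArg Subtype.val hh))
  · have e1 : (cyc w w1 w2).subtypePerm (p := fun x => weight x = w0)
        (fun x => by simp only [hcons x]) = 1 := by
      apply Equiv.ext
      rintro ⟨t, ht⟩
      have htw : t ≠ w := fun hh => h0 (hh ▸ ht)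
      have htw1 : t ≠ w1 := fun hh => h0 (hww1.symm.trans (hh ▸ ht))
      have htw2 : t ≠ w2 := fun hh => h0 (hww2.symm.trans (hh ▸ ht))
      apply Subtype.ext
      simp only [Equiv.Perm.subtypePerm_apply, Equiv.Perm.one_apply]
      exact cyc_other htw htw1 htw2
    rw [e1, map_one]

end AltSide

section Decomp
variable {A : Type*} [Fintype A] [DecidableEq A] {n : ℕ}

lemma isThreeCycle_eq_cyc {γ : Type*} [DecidableEq γ] [Fintype γ] {τ : Equiv.Perm γ}
    (h : τ.IsThreeCycle) : ∃ a b c, a ≠ b ∧ a ≠ c ∧ b ≠ c ∧ τ = cyc a b c := by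
  obtain ⟨a, b, c, hab, hac, hbc, hs⟩ := Finset.card_eq_three.mp h.card_support
  have hfix : ∀ t : γ, t ≠ a → t ≠ b → t ≠ c → τ t = t := by
    intro t h1 h2 h3
    by_contra hne
    have : t ∈ τ.support := Equiv.Perm.mem_support.mpr hne
    rw [hs] at this
    simp only [Finset.mem_insert, Finset.mem_singleton] at this
    tauto
  have hsup : ∀ t : γ, t = a ∨ t = b ∨ t = c → τ t ≠ t := by
    intro t htm
    have : t ∈ τ.support := by
      rw [hs]; simp only [Finset.mem_insert, Finset.mem_singleton]; tauto
    exact Equiv.Perm.mem_support.mp this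
  have ha : τ a ≠ a := hsup a (Or.inl rfl)
  have hb : τ b ≠ b := hsup b (Or.inr (Or.inl rfl))
  have hc : τ c ≠ c := hsup c (Or.inr (Or.inr rfl))
  have himg : ∀ t : γ, τ t ≠ t → (τ t = a ∨ τ t = b ∨ τ t = c) := by
    intro t h1
    have h2 : τ t ∈ τ.support :=
      Equiv.Perm.apply_mem_support.mpr (Equiv.Perm.mem_support.mpr h1)
    rw [hs] at h2
    simpa using h2
  have key : ∀ u v w : γ, u ≠ v → u ≠ w → v ≠ w → τ u = v → τ v = w → τ w = u →
      (∀ t, t ≠ u → t ≠ v → t ≠ w → τ t = t) → τ = cyc u v w := by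
    intro u v w huv huw hvw e1 e2 e3 hf
    ext t
    rcases eq_or_ne t u with rfl | n1
    · rw [cyc_fst huv huw]; exact e1
    rcases eq_or_ne t v with rfl | n2
    · rw [cyc_snd hvw huw]; exact e2
    rcases eq_or_ne t w with rfl | n3
    · rw [cyc_thd]; exact e3
    · rw [cyc_other n1 n2 n3]; exact hf t n1 n2 n3
  rcases himg a ha with h1 | h1 | h1
  · exact absurd h1 ha
  · -- τ a = b
    have h2 : τ b = c := by
      rcases himg b hb with e | e | e
      · exfalso
        rcases himg c hc with f | f | f
        · exact hbc (τ.injective (e.trans f.symm))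
        · exact hac (τ.injective (h1.trans f.symm))
        · exact hc f
      · exact absurd e hb
      · exact e
    have h3 : τ c = a := by
      rcases himg c hc with f | f | f
      · exact f
      · exact absurd (τ.injective (f.trans h1.symm)) (fun hh => hac hh.symm)
      · exact absurd f hc
    exact ⟨a, b, c, hab, hac, hbc, key a b c hab hac hbc h1 h2 h3 hfix⟩
  · -- τ a = c
    have h2 : τ c = b := by
      rcases himg c hc with f | f | f
      · exfalso
        rcases himg b hb with e | e | e
        · exact hbc (τ.injective (e.trans f.symm))
        · exact hb e
        · exact hab (τ.injective (h1.trans e.symm))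
      · exact f
      · exact absurd f hc
    have h3 : τ b = a := by
      rcases himg b hb with e | e | e
      · exact e
      · exact absurd e hb
      · exact absurd (τ.injective (e.trans h1.symm)) (fun hh => hab hh.symm)
    exact ⟨a, c, b, hac, hab, hbc.symm, key a c b hac hab (fun hh => hbc hh.symm) h1 h2 h3
      (fun t n1 n2 n3 => hfix t n1 n3 n2)⟩

lemma ofSubtype_cyc {γ : Type*} [DecidableEq γ] {p : γ → Prop} [DecidablePred p]
    (a b c : Subtype p) :
    Equiv.Perm.ofSubtype (cyc a b c) = cyc a.1 b.1 c.1 := by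
  rw [cyc, cyc, map_mul, Equiv.Perm.ofSubtype_swap_eq, Equiv.Perm.ofSubtype_swap_eq]

lemma mem_GW_of_altCons (hn : Fintype.card A < n) (g : Equiv.Perm (Fin n → A))
    (hg : AltConservative g) : g ∈ GW A n := by
  obtain ⟨hcons, hs⟩ := hg
  have hone : ∀ g : Equiv.Perm (Fin n → A),
      ((Finset.univ.image (fun x : Fin n → A => weight x)).filter
        (fun w => ∃ x, weight x = w ∧ g x ≠ x)) = ∅ → g = 1 := by
    intro g hFe
    apply Equiv.ext
    intro x
    by_contra hx
    have hx' : g x ≠ x := by simpa using hx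
    have hmem : weight x ∈ (Finset.univ.image (fun x : Fin n → A => weight x)).filter
        (fun w => ∃ x, weight x = w ∧ g x ≠ x) :=
      Finset.mem_filter.mpr ⟨Finset.mem_image.mpr ⟨x, Finset.mem_univ x, rfl⟩, x, rfl, hx'⟩
    rw [hFe] at hmem
    exact absurd hmem (Finset.notMem_empty _)
  suffices H : ∀ (k : ℕ) (g : Equiv.Perm (Fin n → A)) (hcons : IsConservative g),
      (∀ w : A → ℕ, Equiv.Perm.sign (g.subtypePerm (p := fun x => weight x = w)
        (fun x => by simp only [hcons x])) = 1) →
      ((Finset.univ.image (fun x : Fin n → A => weight x)).filter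
        (fun w => ∃ x, weight x = w ∧ g x ≠ x)).card ≤ k → g ∈ GW A n by
    exact H _ g hcons hs le_rfl
  intro k
  induction k with
  | zero =>
    intro g hcons hsg hM
    rw [hone g (Finset.card_eq_zero.mp (Nat.le_zero.mp hM))]
    exact one_mem _
  | succ k ih =>
    intro g hcons hsg hM
    rcases Finset.eq_empty_or_nonempty
      ((Finset.univ.image (fun x : Fin n → A => weight x)).filter
        (fun w => ∃ x, weight x = w ∧ g x ≠ x)) with hFe | ⟨w0, hw0⟩
    · rw [hone g hFe]; exact one_mem _
    have hiff : ∀ x : Fin n → A, weight x = w0 ↔ weight (g x) = w0 :=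
      fun x => by simp only [hcons x]
    set τ0 : Equiv.Perm {x : Fin n → A // weight x = w0} :=
      g.subtypePerm (p := fun x => weight x = w0) (fun x => (hiff x).symm) with hτ0
    have hτalt : τ0 ∈ alternatingGroup {x : Fin n → A // weight x = w0} :=
      Equiv.Perm.mem_alternatingGroup.mpr (hsg w0)
    rw [← Equiv.Perm.closure_three_cycles_eq_alternating] at hτalt
    have hσGW : Equiv.Perm.ofSubtype τ0 ∈ GW A n := by
      refine Subgroup.closure_induction
        (p := fun τ _ => Equiv.Perm.ofSubtype τ ∈ GW A n) ?_ ?_ ?_ ?_ hτalt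
      · intro τ hτ
        obtain ⟨a, b, c, hab, hac, hbc, rfl⟩ := isThreeCycle_eq_cyc hτ
        rw [ofSubtype_cyc]
        exact word3 hn (fun h => hab (Subtype.ext h)) (fun h => hac (Subtype.ext h))
          (fun h => hbc (Subtype.ext h)) (a.2.trans b.2.symm) (a.2.trans c.2.symm)
      · show Equiv.Perm.ofSubtype (1 : Equiv.Perm {x : Fin n → A // weight x = w0}) ∈ GW A n
        rw [map_one]; exact one_mem _
      · intro τ1 τ2 _ _ m1 m2
        show Equiv.Perm.ofSubtype (τ1 * τ2) ∈ GW A n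
        rw [map_mul]; exact mul_mem m1 m2
      · intro τ1 _ m1
        show Equiv.Perm.ofSubtype τ1⁻¹ ∈ GW A n
        rw [map_inv]; exact inv_mem m1
    set σ : Equiv.Perm (Fin n → A) := Equiv.Perm.ofSubtype τ0 with hσdef
    have hσ_mem : ∀ x, weight x = w0 → σ x = g x := fun x hx => by
      rw [hσdef, Equiv.Perm.ofSubtype_apply_of_mem τ0 hx]
      rfl
    have hσ_nmem : ∀ x, weight x ≠ w0 → σ x = x := fun x hx =>
      Equiv.Perm.ofSubtype_apply_of_not_mem τ0 hx
    have hσcons : IsConservative σ := fun x => by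
      by_cases hx : weight x = w0
      · rw [hσ_mem x hx]; exact hcons x
      · rw [hσ_nmem x hx]
    set g2 : Equiv.Perm (Fin n → A) := σ⁻¹ * g with hg2def
    have hg2cons : IsConservative g2 := fun x => by
      rw [hg2def, Equiv.Perm.mul_apply]
      exact (cons_inv hσcons (g x)).trans (hcons x)
    have hg2_mem : ∀ x, weight x = w0 → g2 x = x := fun x hx => by
      rw [hg2def, Equiv.Perm.mul_apply, ← hσ_mem x hx, ← Equiv.Perm.mul_apply, inv_mul_cancel, Equiv.Perm.one_apply]
    have hg2_nmem : ∀ x, weight x ≠ w0 → g2 x = g x := fun x hx => by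
      have h1 : σ (g x) = g x := hσ_nmem (g x) (by rw [hcons x]; exact hx)
      rw [hg2def, Equiv.Perm.mul_apply]
      exact (Equiv.Perm.inv_eq_iff_eq).mpr h1.symm
    have hg2sign : ∀ w : A → ℕ, Equiv.Perm.sign (g2.subtypePerm (p := fun x => weight x = w)
        (fun x => by simp only [hg2cons x])) = 1 := by
      intro w
      by_cases hw : w = w0
      · subst hw
        have he : g2.subtypePerm (p := fun x => weight x = w)
            (fun x => by simp only [hg2cons x]) = 1 := by
          apply Equiv.ext
          rintro ⟨t, ht⟩
          apply Subtype.ext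
          simp only [Equiv.Perm.subtypePerm_apply, Equiv.Perm.one_apply]
          exact hg2_mem t ht
        rw [he, map_one]
      · have he : g2.subtypePerm (p := fun x => weight x = w)
            (fun x => by simp only [hg2cons x]) =
            g.subtypePerm (p := fun x => weight x = w) (fun x => by simp only [hcons x]) := by
          apply Equiv.ext
          rintro ⟨t, ht⟩
          apply Subtype.ext
          simp only [Equiv.Perm.subtypePerm_apply]
          exact hg2_nmem t (by rw [ht]; exact hw)
        rw [he]
        exact hsg w
    have hsub : (Finset.univ.image (fun x : Fin n → A => weight x)).filter
        (fun w => ∃ x, weight x = w ∧ g2 x ≠ x) ⊆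
        ((Finset.univ.image (fun x : Fin n → A => weight x)).filter
          (fun w => ∃ x, weight x = w ∧ g x ≠ x)).erase w0 := by
      intro w hw
      obtain ⟨hwim, x, hx, hgx⟩ := Finset.mem_filter.mp hw
      have hww0 : w ≠ w0 := by
        rintro rfl
        exact hgx (hg2_mem x hx)
      refine Finset.mem_erase.mpr ⟨hww0, Finset.mem_filter.mpr ⟨hwim, x, hx, ?_⟩⟩
      intro h
      apply hgx
      rw [hg2_nmem x (by rw [hx]; exact hww0)]
      exact h
    have hcard2 : ((Finset.univ.image (fun x : Fin n → A => weight x)).filter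
        (fun w => ∃ x, weight x = w ∧ g2 x ≠ x)).card ≤ k := by
      have h1 := Finset.card_le_card hsub
      rw [Finset.card_erase_of_mem hw0] at h1
      omega
    have hg2GW : g2 ∈ GW A n := ih g2 hg2cons hg2sign hcard2
    have hfin : g = σ * g2 := by rw [hg2def]; group
    rw [hfin]
    exact mul_mem hσGW hg2GW

end Decomp

end Stmt16Aux

/-- for `n > |A|`, the subgroup of `Sym(A^n)` generated by the `3`-cycles of
words `(x·a·b·c·y, x·b·c·a·y, x·c·a·b·y)` (with `a, b, c` not all equal) obtained from one
another by rotating three consecutive symbols equals the set of conservative permutations of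
`A^n` that are even on each weight class. -/
theorem stmt16 (A : Type*) [Fintype A] [DecidableEq A] (n : ℕ) (hn : Fintype.card A < n)
    (g : Equiv.Perm (Fin n → A)) :
    g ∈ Subgroup.closure {s : Equiv.Perm (Fin n → A) |
        ∃ (i : Fin n) (hi : (i : ℕ) + 2 < n) (w : Fin n → A),
          ¬ (w i = w ⟨(i : ℕ) + 1, by omega⟩ ∧
             w ⟨(i : ℕ) + 1, by omega⟩ = w ⟨(i : ℕ) + 2, hi⟩) ∧
          s = Equiv.swap w (fun j => w (rot3 i hi j)) *
              Equiv.swap (fun j => w (rot3 i hi j)) (fun j => w (rot3 i hi (rot3 i hi j)))} ↔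
      AltConservative g := by
  constructor
  · intro hg
    have hle : Subgroup.closure (Stmt16Aux.genSet A n) ≤ Stmt16Aux.altCons A n :=
      (Subgroup.closure_le _).mpr (fun s hs => Stmt16Aux.gen_altCons hs)
    exact hle hg
  · intro hg
    exact Stmt16Aux.mem_GW_of_altCons hn g hg
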